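/- Let a < b be real numbers, let f : ℝ → ℝ be continuously differentiable on [a,b], and let α₀ ∈ (0,1). If D^α_{*a} f(t) ≥ 0 for all t ∈ [a,b] and all α ∈ (α₀, 1), then f is monotone increasing on [a,b]. -/

import Mathlib

/-- The Caputo fractional derivative of order `α` with starting point `a`:
`D^α_{*a} f(t) = (1/Γ(1-α)) ∫_a^t (t-s)^(-α) f'(s) ds`. -/
noncomputable def caputoDeriv (a α : ℝ) (f : ℝ → ℝ) (t : ℝ) : ℝ :=
  (Real.Gamma (1 - α))⁻¹ * ∫ s in a..t, (t - s) ^ (-α) * deriv f s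

set_option maxHeartbeats 1000000 in
theorem monotoneOn_of_caputo_nonneg (a b : ℝ) (hab : a < b) (f : ℝ → ℝ)
    (hf : ContDiffOn ℝ 1 f (Set.Icc a b))
    (α₀ : ℝ) (hα₀ : α₀ ∈ Set.Ioo (0 : ℝ) 1)
    (h : ∀ t ∈ Set.Icc a b, ∀ α ∈ Set.Ioo α₀ 1, 0 ≤ caputoDeriv a α f t) :
    MonotoneOn f (Set.Icc a b) := by
  obtain ⟨hα₀0, hα₀1⟩ := hα₀
  set g := derivWithin f (Set.Icc a b) with hg_def
  have hgcont : ContinuousOn g (Set.Icc a b) :=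
    hf.continuousOn_derivWithin (uniqueDiffOn_Icc hab) le_rfl
  have hgd : ∀ s ∈ Set.Ioo a b, g s = deriv f s := fun s hs =>
    derivWithin_of_mem_nhds (Icc_mem_nhds hs.1 hs.2)
  obtain ⟨M, hM⟩ := (isCompact_Icc).exists_bound_of_continuousOn hgcont
  have hM0 : 0 ≤ M := le_trans (norm_nonneg _) (hM a ⟨le_rfl, hab.le⟩)
  apply monotoneOn_of_deriv_nonneg (convex_Icc a b) hf.continuousOn
    ((hf.differentiableOn one_ne_zero).mono interior_subset)
  intro t ht'
  rw [interior_Icc] at ht'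
  by_contra hc'
  push_neg at hc'
  set c := deriv f t with hc_def
  have ht1 : a < t := ht'.1
  have ht2 : t < b := ht'.2
  have hgt : g t = c := hgd t ht'
  have hcw : ContinuousWithinAt g (Set.Icc a b) t := hgcont t ⟨ht1.le, ht2.le⟩
  rw [Metric.continuousWithinAt_iff] at hcw
  obtain ⟨δ', hδ'0, hδ'⟩ := hcw (-c/2) (by linarith)
  set δ := min (δ'/2) (min ((t-a)/2) 1) with hδdef
  have hδ0 : 0 < δ := lt_min (by linarith) (lt_min (by linarith) one_pos)
  have hδ1 : δ ≤ 1 := le_trans (min_le_right _ _) (min_le_right _ _)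
  have hδta : δ ≤ (t-a)/2 := le_trans (min_le_right _ _) (min_le_left _ _)
  have hδδ' : δ < δ' := lt_of_le_of_lt (min_le_left _ _) (by linarith)
  have hat : a < t - δ := by linarith
  -- near t, g is at most c/2
  have hnear : ∀ s ∈ Set.Icc (t-δ) t, g s ≤ c/2 := by
    intro s hs
    have hsab : s ∈ Set.Icc a b := ⟨by linarith [hs.1], le_trans hs.2 ht2.le⟩
    have hd : dist s t < δ' := by
      rw [Real.dist_eq, abs_lt]
      exact ⟨by linarith [hs.1], by linarith [hs.2]⟩
    have := hδ' hsab hd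
    rw [Real.dist_eq, hgt] at this
    have := abs_lt.mp this
    linarith [this.1, this.2]
  -- choice of α
  set ε := (-c/2) * δ^2 / ((t-a)*M + 1) with hεdef
  have hA0 : 0 ≤ (t-a)*M := mul_nonneg (by linarith) hM0
  have hε0 : 0 < ε := div_pos (mul_pos (by linarith) (pow_pos hδ0 2)) (by linarith)
  set α := 1 - min ε (1 - α₀) / 2 with hαdef
  have hαm : 0 < min ε (1-α₀) := lt_min hε0 (by linarith)
  have h1α : 1 - α = min ε (1-α₀)/2 := by rw [hαdef]; ring
  have hα1 : α < 1 := by rw [hαdef]; linarith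
  have hαα₀ : α₀ < α := by
    have hle : min ε (1-α₀) ≤ 1-α₀ := min_le_right _ _
    rw [hαdef]; linarith
  have hα0 : 0 < α := by linarith
  have h1α0 : 0 < 1 - α := by linarith
  have h1αε : 1 - α ≤ ε/2 := by
    rw [h1α]; linarith [min_le_left ε (1-α₀)]
  -- integrability
  have hpow_int : IntervalIntegrable (fun s => (t - s) ^ (-α)) MeasureTheory.volume a t := by
    have h0 : IntervalIntegrable (fun x : ℝ => x ^ (-α)) MeasureTheory.volume (t - a) (t - t) :=
      intervalIntegral.intervalIntegrable_rpow' (by linarith)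
    have := h0.comp_sub_left t
    simpa using this
  have huIcc : Set.uIcc a t = Set.Icc a t := Set.uIcc_of_le ht1.le
  have hmem1 : t - δ ∈ Set.uIcc a t := by
    rw [huIcc]; exact ⟨by linarith, by linarith⟩
  have hint : IntervalIntegrable (fun s => (t - s) ^ (-α) * g s) MeasureTheory.volume a t :=
    hpow_int.mul_continuousOn (hgcont.mono (by
      rw [huIcc]; exact Set.Icc_subset_Icc le_rfl ht2.le))
  have hint1 : IntervalIntegrable (fun s => (t - s) ^ (-α) * g s) MeasureTheory.volume a (t-δ) :=
    hint.mono_set (Set.uIcc_subset_uIcc Set.left_mem_uIcc hmem1)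
  have hint2 : IntervalIntegrable (fun s => (t - s) ^ (-α) * g s) MeasureTheory.volume (t-δ) t :=
    hint.mono_set (Set.uIcc_subset_uIcc hmem1 Set.right_mem_uIcc)
  have hpow2 : IntervalIntegrable (fun s => (t - s) ^ (-α)) MeasureTheory.volume (t-δ) t :=
    hpow_int.mono_set (Set.uIcc_subset_uIcc hmem1 Set.right_mem_uIcc)
  -- the integral with deriv equals the integral with g
  have hI0 : (∫ s in a..t, (t - s) ^ (-α) * deriv f s)
      = ∫ s in a..t, (t - s) ^ (-α) * g s := by
    apply intervalIntegral.integral_congr_ae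
    filter_upwards with s hs
    rw [Set.uIoc_of_le ht1.le] at hs
    rw [hgd s ⟨hs.1, lt_of_le_of_lt hs.2 ht2⟩]
  -- split
  have hsplit : (∫ s in a..t, (t - s) ^ (-α) * g s)
      = (∫ s in a..(t-δ), (t - s) ^ (-α) * g s)
        + ∫ s in (t-δ)..t, (t - s) ^ (-α) * g s :=
    (intervalIntegral.integral_add_adjacent_intervals hint1 hint2).symm
  -- far bound
  have hrpow_nonneg : (0:ℝ) ≤ δ ^ (-α) := Real.rpow_nonneg hδ0.le _
  have hfar : (∫ s in a..(t-δ), (t - s) ^ (-α) * g s) ≤ (t-a) * M / δ := by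
    have hptwise : ∀ s ∈ Set.Icc a (t-δ), (t - s) ^ (-α) * g s ≤ δ ^ (-α) * M := by
      intro s hs
      have h2 : δ ≤ t - s := by linarith [hs.2]
      have h3 : (t - s) ^ (-α) ≤ δ ^ (-α) :=
        Real.rpow_le_rpow_of_nonpos hδ0 h2 (by linarith)
      have h4 : (0:ℝ) ≤ (t - s) ^ (-α) := Real.rpow_nonneg (by linarith) _
      have h5 : g s ≤ M := le_trans (le_abs_self _) (hM s ⟨hs.1, by linarith [hs.2]⟩)
      calc (t-s)^(-α) * g s ≤ (t-s)^(-α) * M := mul_le_mul_of_nonneg_left h5 h4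
        _ ≤ δ^(-α) * M := mul_le_mul_of_nonneg_right h3 hM0
    have hmono := intervalIntegral.integral_mono_on (by linarith : a ≤ t-δ) hint1
      (intervalIntegrable_const) hptwise
    rw [intervalIntegral.integral_const, smul_eq_mul] at hmono
    have hδinv : δ ^ (-α) ≤ δ⁻¹ := by
      have := Real.rpow_le_rpow_of_exponent_ge hδ0 hδ1 (by linarith : (-1:ℝ) ≤ -α)
      rwa [Real.rpow_neg_one] at this
    have hstep : (t - δ - a) * (δ ^ (-α) * M) ≤ (t-a) * M / δ := by
      rw [div_eq_mul_inv]
      have e1 : (t - δ - a) * (δ ^ (-α) * M) ≤ (t - a) * (δ ^ (-α) * M) :=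
        mul_le_mul_of_nonneg_right (by linarith) (mul_nonneg hrpow_nonneg hM0)
      have e2 : (t - a) * (δ ^ (-α) * M) ≤ (t - a) * (δ⁻¹ * M) :=
        mul_le_mul_of_nonneg_left
          (mul_le_mul_of_nonneg_right hδinv hM0) (by linarith)
      calc (t - δ - a) * (δ ^ (-α) * M) ≤ (t - a) * (δ⁻¹ * M) := le_trans e1 e2
        _ = (t-a) * M * δ⁻¹ := by ring
    linarith
  -- value of the near power integral
  have hδpow : (∫ s in (t-δ)..t, (t - s) ^ (-α)) = δ^(1-α)/(1-α) := by
    have hcomp := intervalIntegral.integral_comp_sub_left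
      (a := t-δ) (b := t) (fun x : ℝ => x ^ (-α)) t
    rw [hcomp]
    simp only [sub_self, sub_sub_cancel]
    rw [integral_rpow (Or.inl (by linarith))]
    rw [show -α + 1 = 1 - α by ring, Real.zero_rpow (by linarith : (1:ℝ) - α ≠ 0)]
    ring
  -- near bound
  have hnear' : (∫ s in (t-δ)..t, (t - s) ^ (-α) * g s) ≤ c/2 * (δ^(1-α)/(1-α)) := by
    have hintc : IntervalIntegrable (fun s => (t - s) ^ (-α) * (c/2))
        MeasureTheory.volume (t-δ) t := hpow2.mul_const _
    have hptwise : ∀ s ∈ Set.Icc (t-δ) t,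
        (t - s) ^ (-α) * g s ≤ (t - s) ^ (-α) * (c/2) := by
      intro s hs
      have h4 : (0:ℝ) ≤ (t - s) ^ (-α) := Real.rpow_nonneg (by linarith [hs.2]) _
      exact mul_le_mul_of_nonneg_left (hnear s hs) h4
    have hmono := intervalIntegral.integral_mono_on (by linarith : t-δ ≤ t) hint2 hintc hptwise
    rw [intervalIntegral.integral_mul_const, hδpow] at hmono
    linarith [hmono]
  -- the total integral is negative
  have hPδ : δ ≤ δ^(1-α) := by
    have := Real.rpow_le_rpow_of_exponent_ge hδ0 hδ1 (by linarith : 1-α ≤ 1)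
    rwa [Real.rpow_one] at this
  have hP0 : (0:ℝ) < δ^(1-α) := lt_of_lt_of_le hδ0 hPδ
  have key : (1-α) * ((t-a)*M) + (c/2) * (δ^(1-α) * δ) < 0 := by
    have e1 : (1-α) * ((t-a)*M) ≤ (ε/2) * ((t-a)*M + 1) :=
      mul_le_mul h1αε (by linarith) hA0 (by positivity)
    have e2 : (ε/2) * ((t-a)*M + 1) = (-c/4) * δ^2 := by
      rw [hεdef]; field_simp; ring
    have e3 : (c/2) * (δ^(1-α) * δ) ≤ (c/2) * (δ * δ) := by
      apply mul_le_mul_of_nonpos_left _ (by linarith : c/2 ≤ 0)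
      exact mul_le_mul_of_nonneg_right hPδ hδ0.le
    nlinarith [sq_nonneg δ, mul_pos hδ0 hδ0]
  have hRHS : (t-a) * M / δ + c/2 * (δ^(1-α)/(1-α)) < 0 := by
    have heq : (t-a) * M / δ + c/2 * (δ^(1-α)/(1-α))
        = ((1-α) * ((t-a)*M) + (c/2) * (δ^(1-α) * δ)) / (δ * (1-α)) := by
      field_simp
    rw [heq]
    exact div_neg_of_neg_of_pos key (by positivity)
  have hI : (∫ s in a..t, (t - s)^(-α) * g s) < 0 := by
    rw [hsplit]; linarith
  -- contradiction with the Caputo hypothesis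
  have hΓ : 0 < (Real.Gamma (1-α))⁻¹ := inv_pos.mpr (Real.Gamma_pos_of_pos h1α0)
  have hcap := h t ⟨ht1.le, ht2.le⟩ α ⟨hαα₀, hα1⟩
  unfold caputoDeriv at hcap
  rw [hI0] at hcap
  have := mul_neg_of_pos_of_neg hΓ hI
  linarith
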